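/- Let A be the incidence algebra of a finite poset presented by a bound quiver with full commutativity relations and M a finite-dimensional right A-module. For each interval I with Mon(V_I, M) ≠ ∅, let W_I ⊆ Hom_A(V_I, M) be the span of all monomorphisms V_I → M, with basis {f_I^{(1)},…,f_I^{(n_I)}} consisting of monomorphisms. Then the combined morphism (f_I^{(i)})_{I,i} : ⊕_I V_I^{n_I} → M is a right interval approximation of M. -/

import Mathlib

set_option linter.unusedSectionVars false

open scoped Classical

/-- A persistence module over the poset `P`: a functor `P → Vect_k`.
(This models pointwise finite modules over the incidence algebra `A = kQ/ρ` of the poset.) -/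
structure PersMod (k P : Type) [Field k] [PartialOrder P] where
  V : P → Type
  [acg : ∀ a, AddCommGroup (V a)]
  [mod : ∀ a, Module k (V a)]
  map : ∀ {a b : P}, a ≤ b → (V a →ₗ[k] V b)
  map_id : ∀ a : P, map (le_refl a) = LinearMap.id
  map_comp : ∀ {a b c : P} (h₁ : a ≤ b) (h₂ : b ≤ c),
    (map h₂).comp (map h₁) = map (h₁.trans h₂)

attribute [instance] PersMod.acg PersMod.mod

variable {k P : Type} [Field k] [PartialOrder P]

/-- Morphisms of persistence modules, as a `k`-submodule of the product of Hom-spaces. -/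
def PersHomSub (M N : PersMod k P) :
    Submodule k (∀ a : P, M.V a →ₗ[k] N.V a) where
  carrier := {f | ∀ ⦃a b : P⦄ (h : a ≤ b), (N.map h).comp (f a) = (f b).comp (M.map h)}
  add_mem' := by
    intro f g hf hg a b h
    simp only [Pi.add_apply, LinearMap.comp_add, LinearMap.add_comp, hf h, hg h]
  zero_mem' := by intro a b h; simp
  smul_mem' := by
    intro c f hf a b h
    simp only [Pi.smul_apply, LinearMap.comp_smul, LinearMap.smul_comp, hf h]

/-- The space of morphisms `M → N` of persistence modules. -/
def PersHom (M N : PersMod k P) : Type := ↥(PersHomSub M N)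

noncomputable instance (M N : PersMod k P) : AddCommGroup (PersHom M N) :=
  inferInstanceAs (AddCommGroup ↥(PersHomSub M N))
noncomputable instance (M N : PersMod k P) : Module k (PersHom M N) :=
  inferInstanceAs (Module k ↥(PersHomSub M N))

/-- Composition of morphisms of persistence modules. -/
def PersHom.comp {M N O : PersMod k P} (g : PersHom N O) (f : PersHom M N) :
    PersHom M O :=
  ⟨fun a => (g.1 a).comp (f.1 a), by
    intro a b h
    rw [← LinearMap.comp_assoc, g.2 h, LinearMap.comp_assoc, f.2 h, LinearMap.comp_assoc]⟩

def IsMonoP {M N : PersMod k P} (f : PersHom M N) : Prop :=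
  ∀ a : P, Function.Injective (f.1 a)

def IsEpiP {M N : PersMod k P} (f : PersHom M N) : Prop :=
  ∀ a : P, Function.Surjective (f.1 a)

def IsIsoP {M N : PersMod k P} (f : PersHom M N) : Prop :=
  ∀ a : P, Function.Bijective (f.1 a)

/-- Convexity of a subset of the poset. -/
def IsConvexSet (I : Set P) : Prop :=
  ∀ ⦃a b c : P⦄, a ∈ I → c ∈ I → a ≤ b → b ≤ c → b ∈ I

/-- Zigzag-connectivity of a subset of the poset. -/
def IsConnectedSet (I : Set P) : Prop :=
  I.Nonempty ∧ ∀ a ∈ I, ∀ b ∈ I,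
    Relation.ReflTransGen (fun x y => x ∈ I ∧ y ∈ I ∧ (x ≤ y ∨ y ≤ x)) a b

/-- An interval of the poset: a connected convex subset. -/
def IsIntervalSet (I : Set P) : Prop := IsConvexSet I ∧ IsConnectedSet I

/-- The underlying linear map of the interval module. -/
noncomputable def intervalMap (I : Set P) (a b : P) :
    ↥(if a ∈ I then (⊤ : Submodule k k) else ⊥) →ₗ[k]
      ↥(if b ∈ I then (⊤ : Submodule k k) else ⊥) where
  toFun v := ⟨if a ∈ I ∧ b ∈ I then (v : k) else 0, by
    by_cases hb : b ∈ I
    · simp [hb]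
    · have hab : ¬(a ∈ I ∧ b ∈ I) := fun h' => hb h'.2
      rw [if_neg hb, if_neg hab]
      exact Submodule.zero_mem _⟩
  map_add' v w := by
    apply Subtype.ext
    by_cases h' : a ∈ I ∧ b ∈ I <;> simp [h']
  map_smul' c v := by
    apply Subtype.ext
    by_cases h' : a ∈ I ∧ b ∈ I <;> simp [h']

@[simp] lemma intervalMap_coe (I : Set P) (a b : P)
    (v : ↥(if a ∈ I then (⊤ : Submodule k k) else ⊥)) :
    ((intervalMap I a b v : ↥(if b ∈ I then (⊤ : Submodule k k) else ⊥)) : k)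
      = if a ∈ I ∧ b ∈ I then (v : k) else 0 := rfl

lemma intervalMem_zero {I : Set P} {a : P} (ha : a ∉ I)
    (v : ↥(if a ∈ I then (⊤ : Submodule k k) else ⊥)) : (v : k) = 0 := by
  obtain ⟨x, hx⟩ := v
  rw [if_neg ha] at hx
  exact (Submodule.mem_bot k).1 hx

/-- The interval module `V_I` associated to a convex subset `I`. -/
noncomputable def intervalMod (I : Set P) (hI : IsConvexSet I) : PersMod k P where
  V a := ↥(if a ∈ I then (⊤ : Submodule k k) else ⊥)
  map {a b} _ := intervalMap I a b
  map_id a := by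
    ext v
    rw [intervalMap_coe]
    by_cases ha : a ∈ I
    · simp [ha]
    · have hv := intervalMem_zero ha v
      simp only [ha, false_and, if_false, LinearMap.id_coe, id_eq, hv]
  map_comp {a b c} h₁ h₂ := by
    ext v
    rw [LinearMap.comp_apply, intervalMap_coe, intervalMap_coe, intervalMap_coe]
    by_cases ha : a ∈ I <;> by_cases hb : b ∈ I <;> by_cases hc : c ∈ I <;>
      first
        | (exact absurd (hI ha hc h₁ h₂) hb)
        | simp [ha, hb, hc]

/-- Finite direct sums of persistence modules. -/
noncomputable def dSum {ι : Type} (M : ι → PersMod k P) : PersMod k P where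
  V a := ∀ i, (M i).V a
  map {a b} h := LinearMap.pi fun i => ((M i).map h).comp (LinearMap.proj i)
  map_id a := by
    refine LinearMap.ext fun v => ?_
    funext i
    simp [LinearMap.pi_apply, (M i).map_id]
  map_comp {a b c} h₁ h₂ := by
    refine LinearMap.ext fun v => ?_
    funext i
    simpa [LinearMap.pi_apply] using LinearMap.congr_fun ((M i).map_comp h₁ h₂) (v i)

/-- A persistence module is interval decomposable if it is isomorphic to a finite
direct sum of interval modules. -/
def IntervalDecomposable (W : PersMod k P) : Prop :=
  ∃ (n : ℕ) (J : Fin n → Set P) (hJ : ∀ i, IsIntervalSet (J i))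
    (e : PersHom W (dSum fun i => intervalMod (J i) (hJ i).1)), IsIsoP e

/-- The combined morphism `⊕ᵢ Mᵢ → N` of a finite family of morphisms `Mᵢ → N`. -/
noncomputable def combineHom {ι : Type} [Fintype ι] {Mf : ι → PersMod k P}
    {N : PersMod k P} (f : ∀ i, PersHom (Mf i) N) : PersHom (dSum Mf) N :=
  ⟨fun a => ∑ i, ((f i).1 a).comp (LinearMap.proj i), by
    intro a b h
    refine LinearMap.ext fun v => ?_
    simp only [LinearMap.comp_apply, LinearMap.sum_apply, LinearMap.proj_apply, map_sum]
    refine Finset.sum_congr rfl fun i _ => ?_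
    have := LinearMap.congr_fun ((f i).2 h) (v i)
    exact this⟩

/-- `f : X → M` is a right interval approximation: every morphism from an interval module
to `M` factors through `f`. -/
def IsRightIntervalApprox {k P : Type} [Field k] [PartialOrder P]
    {X M : PersMod k P} (f : PersHom X M) : Prop :=
  ∀ (J : Set P) (hJ : IsIntervalSet J) (g : PersHom (intervalMod J hJ.1) M),
    ∃ h : PersHom (intervalMod J hJ.1) X, f.comp h = g

section Aux

/-- Change of supporting set map between interval fibers at the same point. -/
noncomputable def cMap (S T : Set P) (a : P) :
    ↥(if a ∈ S then (⊤ : Submodule k k) else ⊥) →ₗ[k]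
      ↥(if a ∈ T then (⊤ : Submodule k k) else ⊥) where
  toFun v := ⟨if a ∈ S ∧ a ∈ T then (v : k) else 0, by
    by_cases hb : a ∈ T
    · simp [hb]
    · have h' : ¬(a ∈ S ∧ a ∈ T) := fun h' => hb h'.2
      rw [if_neg hb, if_neg h']
      exact Submodule.zero_mem _⟩
  map_add' v w := by
    apply Subtype.ext
    by_cases h' : a ∈ S ∧ a ∈ T <;> simp [h']
  map_smul' c v := by
    apply Subtype.ext
    by_cases h' : a ∈ S ∧ a ∈ T <;> simp [h']

@[simp] lemma cMap_coe (S T : Set P) (a : P)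
    (v : ↥(if a ∈ S then (⊤ : Submodule k k) else ⊥)) :
    ((cMap S T a v : ↥(if a ∈ T then (⊤ : Submodule k k) else ⊥)) : k)
      = if a ∈ S ∧ a ∈ T then (v : k) else 0 := rfl

lemma intervalEl_zero' {S : Set P} {a : P} (ha : a ∉ S)
    (v : ↥(if a ∈ S then (⊤ : Submodule k k) else ⊥)) : v = 0 :=
  Subtype.ext (by simp [intervalMem_zero ha v])

@[simp] lemma intervalMod_map (I : Set P) (hI : IsConvexSet I) {a b : P} (h : a ≤ b) :
    (intervalMod (k := k) I hI).map h = intervalMap I a b := rfl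

lemma persHom_comm {M N : PersMod k P} (f : PersHom M N) {a b : P} (h : a ≤ b)
    (v : M.V a) : N.map h (f.1 a v) = f.1 b (M.map h v) :=
  LinearMap.congr_fun (f.2 h) v

/-- The zigzag relation inside a subset `K`. -/
def zigR (K : Set P) (x y : P) : Prop := x ∈ K ∧ y ∈ K ∧ (x ≤ y ∨ y ≤ x)

lemma zigR_symm (K : Set P) : Symmetric (zigR K) :=
  fun _ _ h => ⟨h.2.1, h.1, h.2.2.symm⟩

lemma zzR_symm {K : Set P} {x y : P} (h : Relation.ReflTransGen (zigR K) x y) :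
    Relation.ReflTransGen (zigR K) y x :=
  by
    haveI : Std.Symm (zigR K) := ⟨fun _ _ h => zigR_symm K h⟩
    exact Std.Symm.symm _ _ h

/-- The zigzag-connected component of `a` inside `K`. -/
def compOf (K : Set P) (a : P) : Set P :=
  {b | b ∈ K ∧ Relation.ReflTransGen (zigR K) a b}

lemma mem_compOf_self {K : Set P} {a : P} (ha : a ∈ K) : a ∈ compOf K a :=
  ⟨ha, Relation.ReflTransGen.refl⟩

lemma compOf_subset (K : Set P) (a : P) : compOf K a ⊆ K := fun _ h => h.1

lemma compOf_eq {K : Set P} {a b : P} (hb : b ∈ compOf K a) :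
    compOf K b = compOf K a := by
  ext c
  exact ⟨fun hc => ⟨hc.1, hb.2.trans hc.2⟩, fun hc => ⟨hc.1, (zzR_symm hb.2).trans hc.2⟩⟩

lemma compOf_up {K : Set P} {a x y : P} (hx : x ∈ compOf K a) (hy : y ∈ K)
    (hr : x ≤ y ∨ y ≤ x) : y ∈ compOf K a :=
  ⟨hy, hx.2.tail ⟨hx.1, hy, hr⟩⟩

lemma zz_restrict {K : Set P} {a b c : P} (hb : b ∈ compOf K a)
    (h : Relation.ReflTransGen (zigR K) b c) :
    Relation.ReflTransGen (zigR (compOf K a)) b c := by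
  induction h with
  | refl => exact Relation.ReflTransGen.refl
  | @tail z c' h₁ h₂ ih =>
      have hz : z ∈ compOf K a := ⟨h₂.1, hb.2.trans h₁⟩
      have hc : c' ∈ compOf K a := ⟨h₂.2.1, (hb.2.trans h₁).tail h₂⟩
      exact ih.tail ⟨hz, hc, h₂.2.2⟩

lemma compOf_interval {K : Set P} (hconv : IsConvexSet K) {a : P} (ha : a ∈ K) :
    IsIntervalSet (compOf K a) := by
  constructor
  · intro x y z hx hz hxy hyz
    have hyK : y ∈ K := hconv hx.1 hz.1 hxy hyz
    exact compOf_up hz hyK (Or.inr hyz)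
  · refine ⟨⟨a, mem_compOf_self ha⟩, fun b hb c hc => ?_⟩
    have hbc : Relation.ReflTransGen (zigR K) b c := (zzR_symm hb.2).trans hc.2
    exact zz_restrict hb hbc

variable {M : PersMod k P} {J : Set P} {hJc : IsConvexSet J}

/-- The support of a morphism `g : V_J → M`. -/
def Ksupp (g : PersHom (intervalMod J hJc) M) : Set P :=
  {a | a ∈ J ∧ g.1 a ≠ 0}

lemma Ksupp_dc (g : PersHom (intervalMod J hJc) M) {x y : P}
    (hxy : x ≤ y) (hxJ : x ∈ J) (hy : y ∈ Ksupp g) : x ∈ Ksupp g := by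
  refine ⟨hxJ, fun h0 => hy.2 ?_⟩
  refine LinearMap.ext fun (w : ↥(if y ∈ J then (⊤ : Submodule k k) else ⊥)) => ?_
  set u : ↥(if x ∈ J then (⊤ : Submodule k k) else ⊥) := ⟨(w : k), by simp [hxJ]⟩ with hudef
  have hu : (intervalMod (k := k) J hJc).map hxy u = w := by
    apply Subtype.ext
    show (if x ∈ J ∧ y ∈ J then ((u : k)) else 0) = (w : k)
    simp [hxJ, hy.1, hudef]
  have hcomm := persHom_comm g hxy u
  rw [h0, hu] at hcomm
  exact hcomm.symm.trans (map_zero (M.map hxy))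

lemma g_zero_off_supp (g : PersHom (intervalMod J hJc) M) {y : P}
    (hyJ : y ∈ J) (hy : y ∉ Ksupp g) : g.1 y = 0 := by
  by_contra hne
  exact hy ⟨hyJ, hne⟩

/-- The monomorphism `V_I → M` induced by `g` on a suitable subset `I` of its support. -/
noncomputable def mI (g : PersHom (intervalMod J hJc) M) (I : Set P) (hIc : IsConvexSet I)
    (hIK : I ⊆ Ksupp g)
    (hup : ∀ ⦃x y : P⦄, x ∈ I → x ≤ y → y ∈ Ksupp g → y ∈ I) :
    PersHom (intervalMod I hIc) M := by
  refine ⟨fun x => (g.1 x).comp (cMap I J x), ?_⟩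
  intro x y hxy
  refine LinearMap.ext fun v => ?_
  simp only [LinearMap.comp_apply, intervalMod_map]
  refine (persHom_comm g hxy _).trans ?_
  show g.1 y (intervalMap J x y (cMap I J x v)) = g.1 y (cMap I J y (intervalMap I x y v))
  by_cases hxI : x ∈ I
  · have hxK := hIK hxI
    by_cases hyI : y ∈ I
    · have hyK := hIK hyI
      congr 1
      apply Subtype.ext
      change ↥(if x ∈ I then (⊤ : Submodule k k) else ⊥) at v
      simp [hxI, hyI, hxK.1, hyK.1]
    · have h2 : cMap I J y (intervalMap I x y v) = 0 := by
        apply Subtype.ext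
        simp [hyI]
      rw [h2]
      erw [map_zero]
      by_cases hyJ : y ∈ J
      · have hg0 : g.1 y = 0 :=
          g_zero_off_supp g hyJ (fun hy => hyI (hup hxI hxy hy))
        erw [hg0]
        rfl
      · have h3 : intervalMap J x y (cMap I J x v) = 0 := by
          apply Subtype.ext
          simp [hyJ]
        rw [h3]
        erw [map_zero]
  · have hv : v = 0 := intervalEl_zero' hxI v
    rw [hv]
    erw [map_zero, map_zero, map_zero, map_zero, map_zero, map_zero]

lemma mI_mono (g : PersHom (intervalMod J hJc) M) (I : Set P) (hIc : IsConvexSet I)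
    (hIK : I ⊆ Ksupp g)
    (hup : ∀ ⦃x y : P⦄, x ∈ I → x ≤ y → y ∈ Ksupp g → y ∈ I) :
    IsMonoP (mI g I hIc hIK hup) := by
  intro a
  by_cases haI : a ∈ I
  · have haK := hIK haI
    intro v w hvw
    have hu1mem : (1 : k) ∈ (if a ∈ J then (⊤ : Submodule k k) else ⊥) := by simp [haK.1]
    set u1 : ↥(if a ∈ J then (⊤ : Submodule k k) else ⊥) := ⟨1, hu1mem⟩ with hu1
    have hG : g.1 a u1 ≠ 0 := by
      intro h0
      apply haK.2
      refine LinearMap.ext fun (u : ↥(if a ∈ J then (⊤ : Submodule k k) else ⊥)) => ?_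
      have hrep : u = (u : k) • u1 := by
        apply Subtype.ext
        simp [hu1]
      rw [hrep]
      erw [map_smul, h0, smul_zero]
      rfl
    have hform : ∀ z : ↥(if a ∈ I then (⊤ : Submodule k k) else ⊥),
        (mI g I hIc hIK hup).1 a z = (z : k) • g.1 a u1 := by
      intro z
      show g.1 a (cMap I J a z) = (z : k) • g.1 a u1
      have : cMap I J a z = (z : k) • u1 := by
        apply Subtype.ext
        simp [haI, haK.1, hu1]
      rw [this]
      erw [map_smul]
    rw [hform v, hform w] at hvw
    exact Subtype.ext (smul_left_injective k hG hvw)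
  · intro v w _
    rw [intervalEl_zero' haI v, intervalEl_zero' haI w]

end Aux

/-- For each interval `I` admitting a monomorphism `V_I → M`, choose
monomorphisms `b I hI 0, …, b I hI (n I - 1) : V_I → M` forming a basis of the span `W_I`
of all monomorphisms `V_I → M`.  Then the combined morphism
`⊕_{I ∈ S_int(M)} V_I^{n I} → M` is a right interval approximation of `M`. -/
theorem combined_span_of_monos_is_rightIntervalApprox
    {k P : Type} [Field k] [PartialOrder P] [Fintype P]
    (M : PersMod k P) (hMfin : ∀ a, FiniteDimensional k (M.V a))
    (n : Set P → ℕ)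
    (b : ∀ (I : Set P) (hI : IsIntervalSet I), Fin (n I) → PersHom (intervalMod I hI.1) M)
    (hmono : ∀ (I : Set P) (hI : IsIntervalSet I),
      (∃ m : PersHom (intervalMod I hI.1) M, IsMonoP m) → ∀ j, IsMonoP (b I hI j))
    (hindep : ∀ (I : Set P) (hI : IsIntervalSet I),
      (∃ m : PersHom (intervalMod I hI.1) M, IsMonoP m) → LinearIndependent k (b I hI))
    (hspan : ∀ (I : Set P) (hI : IsIntervalSet I),
      (∃ m : PersHom (intervalMod I hI.1) M, IsMonoP m) →
        Submodule.span k (Set.range (b I hI)) =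
          Submodule.span k {g : PersHom (intervalMod I hI.1) M | IsMonoP g}) :
    IsRightIntervalApprox
      (combineHom
        (ι := Σ I : {S : Set P // ∃ hS : IsIntervalSet S,
            ∃ m : PersHom (intervalMod S hS.1) M, IsMonoP m}, Fin (n I.1))
        (fun p => b p.1.1 p.1.2.choose p.2)) := by
  intro J hJ g
  classical
  set K : Set P := Ksupp g with hKdef
  have hKdc : ∀ ⦃x y : P⦄, x ≤ y → x ∈ J → y ∈ K → x ∈ K :=
    fun x y h hx hy => Ksupp_dc g h hx hy
  have hKconv : IsConvexSet K := by
    intro x y z hx hz hxy hyz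
    exact hKdc hyz (hJ.1 hx.1 hz.1 hxy hyz) hz
  set isComp : Set P → Prop := fun I => ∃ a ∈ K, I = compOf K a with hisComp
  have hCompSub : ∀ I, isComp I → I ⊆ K := by
    rintro I ⟨a, ha, rfl⟩
    exact compOf_subset K a
  have hCompUp : ∀ I, isComp I → ∀ ⦃x y : P⦄, x ∈ I → x ≤ y → y ∈ K → y ∈ I := by
    rintro I ⟨a, ha, rfl⟩ x y hx hxy hy
    exact compOf_up hx hy (Or.inl hxy)
  have hCompDown : ∀ I, isComp I → ∀ ⦃x y : P⦄, y ∈ I → x ≤ y → x ∈ K → x ∈ I := by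
    rintro I ⟨a, ha, rfl⟩ x y hy hxy hx
    exact compOf_up hy hx (Or.inr hxy)
  have hCompEq : ∀ I, isComp I → ∀ ⦃x⦄, x ∈ I → I = compOf K x := by
    rintro I ⟨a, ha, rfl⟩ x hx
    exact (compOf_eq hx).symm
  have hCompInt : ∀ I, isComp I → IsIntervalSet I := by
    rintro I ⟨a, ha, rfl⟩
    exact compOf_interval hKconv ha
  have main : ∀ I : Set P, isComp I →
      ∃ (hI : IsIntervalSet I) (c : Fin (n I) → k),
        (∃ mm : PersHom (intervalMod I hI.1) M, IsMonoP mm) ∧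
        ∀ (x : P), x ∈ I → ∀ v : (intervalMod J hJ.1).V x,
          (∑ j, c j • ((b I hI j).1 x (cMap J I x v))) = g.1 x v := by
    intro I hI
    have hint := hCompInt I hI
    have hsub := hCompSub I hI
    have hup := hCompUp I hI
    set mm := mI g I hint.1 hsub hup with hmm
    have hmono' := mI_mono g I hint.1 hsub hup
    have hex : ∃ m' : PersHom (intervalMod I hint.1) M, IsMonoP m' := ⟨mm, hmono'⟩
    have hsp := hspan I hint hex
    have hmem : mm ∈ Submodule.span k (Set.range (b I hint)) := by
      rw [hsp]
      exact Submodule.subset_span hmono'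
    obtain ⟨c, hc⟩ := (Submodule.mem_span_range_iff_exists_fun k).mp hmem
    refine ⟨hint, c, hex, ?_⟩
    intro x hx v
    have hxJ : x ∈ J := (hsub hx).1
    have hval : ∀ v' : (intervalMod I hint.1).V x,
        (∑ j, c j • ((b I hint j).1 x v')) = mm.1 x v' := by
      intro v'
      let E : PersHom (intervalMod I hint.1) M →ₗ[k] M.V x :=
        (LinearMap.applyₗ v').comp ((LinearMap.proj x).comp
          (PersHomSub (intervalMod I hint.1) M).subtype)
      have h1 := congrArg E hc
      rw [map_sum] at h1
      simp only [map_smul] at h1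
      exact h1
    have h4 := hval (cMap J I x v)
    have h5 : cMap I J x (cMap J I x v) = v := by
      apply Subtype.ext
      change ↥(if x ∈ J then (⊤ : Submodule k k) else ⊥) at v
      simp [hx, hxJ]
    calc ∑ j, c j • ((b I hint j).1 x (cMap J I x v)) = mm.1 x (cMap J I x v) := h4
      _ = g.1 x (cMap I J x (cMap J I x v)) := rfl
      _ = g.1 x v := by rw [h5]
  choose hInt cc hdata using main
  set coef : (Σ I : {S : Set P // ∃ hS : IsIntervalSet S,
      ∃ m : PersHom (intervalMod S hS.1) M, IsMonoP m}, Fin (n I.1)) → k :=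
    fun p => if h : isComp p.1.1 then cc p.1.1 h p.2 else 0 with hcoef
  refine ⟨⟨fun x => LinearMap.pi fun p => coef p • (cMap J p.1.1 x :
      (intervalMod J hJ.1).V x →ₗ[k] (intervalMod p.1.1 p.1.2.choose.1).V x), ?_⟩, ?_⟩
  · intro x y hxy
    refine LinearMap.ext fun v => funext fun p => Subtype.ext ?_
    show ((intervalMap p.1.1 x y ((coef p • cMap J p.1.1 x) v) :
          ↥(if y ∈ p.1.1 then (⊤ : Submodule k k) else ⊥)) : k)
        = (((coef p • cMap J p.1.1 y) (intervalMap J x y v) :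
          ↥(if y ∈ p.1.1 then (⊤ : Submodule k k) else ⊥)) : k)
    change ↥(if x ∈ J then (⊤ : Submodule k k) else ⊥) at v
    simp only [LinearMap.smul_apply, Pi.smul_apply, intervalMap_coe, SetLike.val_smul, smul_eq_mul, cMap_coe]
    by_cases hcI : isComp p.1.1
    · by_cases hxI : x ∈ p.1.1
      · have hxK : x ∈ K := hCompSub _ hcI hxI
        by_cases hyI : y ∈ p.1.1
        · have hyK := hCompSub _ hcI hyI
          simp [hxI, hyI, hxK.1, hyK.1]
        · simp [hxI, hyI]
      · by_cases hyI : y ∈ p.1.1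
        · by_cases hxJ : x ∈ J
          · exact absurd
              (hCompDown _ hcI hyI hxy (hKdc hxy hxJ (hCompSub _ hcI hyI))) hxI
          · simp [hxI, hyI, hxJ]
        · simp [hxI, hyI]
    · have hc0 : coef p = 0 := dif_neg hcI
      simp [hc0]
  · apply Subtype.ext
    funext x
    refine LinearMap.ext fun v => ?_
    show (∑ i : (Σ I : {S : Set P // ∃ hS : IsIntervalSet S,
            ∃ m : PersHom (intervalMod S hS.1) M, IsMonoP m}, Fin (n I.1)),
          ((b i.1.1 i.1.2.choose i.2).1 x).comp
            (LinearMap.proj (φ := fun p : (Σ I : {S : Set P // ∃ hS : IsIntervalSet S,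
              ∃ m : PersHom (intervalMod S hS.1) M, IsMonoP m}, Fin (n I.1)) =>
                (intervalMod p.1.1 p.1.2.choose.1).V x) i))
        ((LinearMap.pi fun p => coef p • (cMap J p.1.1 x :
          (intervalMod J hJ.1).V x →ₗ[k] (intervalMod p.1.1 p.1.2.choose.1).V x)) v)
        = g.1 x v
    change ↥(if x ∈ J then (⊤ : Submodule k k) else ⊥) at v
    erw [LinearMap.sum_apply]
    refine (Finset.sum_congr rfl fun i _ => LinearMap.map_smul
      ((b i.1.1 i.1.2.choose i.2).1 x) (coef i) (cMap J i.1.1 x v)).trans ?_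
    by_cases hxK : x ∈ K
    · have hcomp0 : isComp (compOf K x) := ⟨x, hxK, rfl⟩
      have hmemEx : ∃ hS : IsIntervalSet (compOf K x),
          ∃ m : PersHom (intervalMod (compOf K x) hS.1) M, IsMonoP m :=
        ⟨hInt _ hcomp0, (hdata _ hcomp0).1⟩
      set i0 : {S : Set P // ∃ hS : IsIntervalSet S,
          ∃ m : PersHom (intervalMod S hS.1) M, IsMonoP m} := ⟨compOf K x, hmemEx⟩ with hi0
      rw [← Finset.univ_sigma_univ, Finset.sum_sigma]
      rw [Finset.sum_eq_single i0]
      · have hxI0 : x ∈ compOf K x := mem_compOf_self hxK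
        have hkey := (hdata (compOf K x) hcomp0).2 x hxI0 v
        have hcoef0 : ∀ j : Fin (n (compOf K x)),
            coef ⟨i0, j⟩ = cc (compOf K x) hcomp0 j := fun j => dif_pos hcomp0
        calc ∑ j, coef ⟨i0, j⟩ • (b i0.1 i0.2.choose j).1 x (cMap J i0.1 x v)
            = ∑ j, cc (compOf K x) hcomp0 j •
                (b (compOf K x) (hInt (compOf K x) hcomp0) j).1 x (cMap J (compOf K x) x v) := by
              refine Finset.sum_congr rfl fun j _ => ?_
              rw [hcoef0 j]
          _ = g.1 x v := hkey
      · intro i _ hne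
        apply Finset.sum_eq_zero
        intro j _
        by_cases hci : isComp i.1
        · have hxi : x ∉ i.1 := by
            intro hx'
            exact hne (Subtype.ext (hCompEq i.1 hci hx'))
          rw [intervalEl_zero' hxi (cMap J i.1 x v)]
          erw [map_zero, smul_zero]
        · have : coef ⟨i, j⟩ = 0 := dif_neg hci
          rw [this, zero_smul]
      · intro h
        exact absurd (Finset.mem_univ i0) h
    · have hg0 : g.1 x v = 0 := by
        by_cases hxJ : x ∈ J
        · rw [g_zero_off_supp g hxJ hxK]
          rfl
        · rw [intervalEl_zero' hxJ v]
          erw [map_zero]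
      rw [hg0]
      apply Finset.sum_eq_zero
      intro p _
      by_cases hcp : isComp p.1.1
      · have hxp : x ∉ p.1.1 := fun hx' => hxK (hCompSub _ hcp hx')
        rw [intervalEl_zero' hxp (cMap J p.1.1 x v)]
        erw [map_zero, smul_zero]
      · have : coef p = 0 := dif_neg hcp
        rw [this, zero_smul]
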